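/- arXiv:1507.04123 — 4 statements merged into one kernel-verified Lean document; each statement's English description precedes it below -/
import Mathlib

section
/- The ordinary generating function B̂(x) = Σ_{n≥0} βₙ xⁿ of the Carlitz q-Bernoulli numbers satisfies (q/(1−x))·B̂(qx/(1−x)) − B̂(x) = q − 1 + x as formal power series. -/
open Finset Polynomial PowerSeries

noncomputable section

/-- The variable `q`, viewed as a rational function over `ℚ`. -/
def qv : RatFunc ℚ := RatFunc.X

/-- The Carlitz q-Bernoulli numbers: `β 0 = 1` together with the umbral recurrence
`q·(qβ+1)^n − β_n = [n = 1]` for `n ≥ 1`, where after binomial expansion the powers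
`β^k` are replaced by `β k`. -/
def IsCarlitz (β : ℕ → RatFunc ℚ) : Prop :=
  β 0 = 1 ∧ ∀ n : ℕ, 1 ≤ n →
    qv * (∑ k ∈ Finset.range (n + 1), (n.choose k : RatFunc ℚ) * qv ^ k * β k) - β n
      = if n = 1 then 1 else 0

/-- Substitution `G(F)` of a power series `F` with zero constant term into `G`:
the `m`-th coefficient only depends on the partial sum `Σ_{n ≤ m} (coeff n G)·Fⁿ`. -/
def substSeries (F G : PowerSeries (RatFunc ℚ)) : PowerSeries (RatFunc ℚ) :=
  PowerSeries.mk fun m =>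
    PowerSeries.coeff m
      (∑ n ∈ Finset.range (m + 1),
        PowerSeries.C (PowerSeries.coeff n G) * F ^ n)

namespace CarlitzAux

/-- The geometric series `Σ xⁿ`. -/
def S : PowerSeries (RatFunc ℚ) := PowerSeries.mk fun _ => (1 : RatFunc ℚ)

lemma one_sub_X_mul_S : (1 - PowerSeries.X) * S = 1 := by
  ext k
  cases k with
  | zero =>
    simp [S]
  | succ k =>
    rw [sub_mul, one_mul, map_sub, PowerSeries.coeff_succ_X_mul]
    simp [S, PowerSeries.coeff_one]

lemma S_inv : (1 - PowerSeries.X : PowerSeries (RatFunc ℚ))⁻¹ = S := by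
  rw [PowerSeries.inv_eq_iff_mul_eq_one, mul_comm]
  · exact one_sub_X_mul_S
  · simp

lemma coeff_S_mul (φ : PowerSeries (RatFunc ℚ)) (m : ℕ) :
    PowerSeries.coeff m (S * φ)
      = ∑ j ∈ Finset.range (m + 1), PowerSeries.coeff j φ := by
  rw [PowerSeries.coeff_mul, Finset.Nat.sum_antidiagonal_eq_sum_range_succ_mk]
  rw [← Finset.sum_range_reflect]
  refine Finset.sum_congr rfl fun j hj => ?_
  rw [Finset.mem_range, Nat.lt_succ_iff] at hj
  simp [S, Nat.sub_sub_self hj]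

lemma S_pow (n : ℕ) :
    S ^ (n + 1) = (PowerSeries.invOneSubPow (RatFunc ℚ) (n + 1)).val := by
  have h1 : ((PowerSeries.invOneSubPow (RatFunc ℚ) (n + 1)).val
      * (1 - PowerSeries.X) ^ (n + 1) : PowerSeries (RatFunc ℚ)) = 1 := by
    have := (PowerSeries.invOneSubPow (RatFunc ℚ) (n + 1)).val_inv
    rwa [PowerSeries.invOneSubPow_inv_eq_one_sub_pow] at this
  have h2 : ((1 - PowerSeries.X) ^ (n + 1) * S ^ (n + 1) : PowerSeries (RatFunc ℚ)) = 1 := by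
    rw [← mul_pow, one_sub_X_mul_S, one_pow]
  calc S ^ (n + 1)
      = ((PowerSeries.invOneSubPow (RatFunc ℚ) (n + 1)).val
          * (1 - PowerSeries.X) ^ (n + 1)) * S ^ (n + 1) := by rw [h1, one_mul]
    _ = (PowerSeries.invOneSubPow (RatFunc ℚ) (n + 1)).val
          * ((1 - PowerSeries.X) ^ (n + 1) * S ^ (n + 1)) := by ring
    _ = _ := by rw [h2, mul_one]

lemma coeff_S_pow (n m : ℕ) :
    PowerSeries.coeff m (S ^ (n + 1)) = ((n + m).choose n : RatFunc ℚ) := by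
  rw [S_pow, PowerSeries.invOneSubPow_val_succ_eq_mk_add_choose]
  simp

end CarlitzAux

open CarlitzAux in
/-- The functional equation `(q/(1−x))·B̂(qx/(1−x)) − B̂(x) = q − 1 + x` for the ordinary
generating function `B̂(x) = Σ βₙ xⁿ` of the Carlitz q-Bernoulli numbers. -/
theorem carlitz_ogf_functional_equation (β : ℕ → RatFunc ℚ) (h : IsCarlitz β) :
    PowerSeries.C qv * (1 - PowerSeries.X)⁻¹
        * substSeries (PowerSeries.C qv * PowerSeries.X * (1 - PowerSeries.X)⁻¹)
            (PowerSeries.mk fun n => β n)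
      - PowerSeries.mk (fun n => β n)
      = PowerSeries.C (qv - 1) + PowerSeries.X := by
  set F : PowerSeries (RatFunc ℚ) :=
    PowerSeries.C qv * PowerSeries.X * (1 - PowerSeries.X)⁻¹ with hF
  -- coefficient of the term `C (β n) * F ^ n`
  have hFn : ∀ n j : ℕ,
      PowerSeries.coeff j
          (PowerSeries.C (β n) * F ^ n)
        = β n * qv ^ n * (if n ≤ j then (PowerSeries.coeff (j - n) (S ^ n)) else 0) := by
    intro n j
    have : F ^ n = PowerSeries.C (qv ^ n) * (PowerSeries.X ^ n * S ^ n) := by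
      rw [hF, S_inv, mul_pow, mul_pow, map_pow]
      ring
    rw [this, ← mul_assoc, ← map_mul, PowerSeries.coeff_C_mul,
      PowerSeries.coeff_X_pow_mul']
  -- key: coefficient of `S * (C (β n) * F ^ n)` at `m` is `β n * q^n * choose m n` when `n ≤ m`
  have key : ∀ m : ℕ,
      PowerSeries.coeff m
          (PowerSeries.C qv * (1 - PowerSeries.X)⁻¹
            * substSeries F (PowerSeries.mk fun n => β n))
        = qv * ∑ n ∈ Finset.range (m + 1), (m.choose n : RatFunc ℚ) * qv ^ n * β n := by
    intro m
    have hrw : PowerSeries.C qv * (1 - PowerSeries.X)⁻¹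
          * substSeries F (PowerSeries.mk fun n => β n)
        = PowerSeries.C qv
            * (S * substSeries F (PowerSeries.mk fun n => β n)) := by
      rw [S_inv]; ring
    rw [hrw, PowerSeries.coeff_C_mul, coeff_S_mul]
    congr 1
    -- now compute `∑_{j ≤ m} coeff j (substSeries F B)`
    have hsub : ∀ j : ℕ, j ≤ m →
        PowerSeries.coeff j (substSeries F (PowerSeries.mk fun n => β n))
          = ∑ n ∈ Finset.range (m + 1),
              PowerSeries.coeff j
                (PowerSeries.C (β n) * F ^ n) := by
      intro j hj
      rw [substSeries, PowerSeries.coeff_mk, map_sum]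
      simp only [PowerSeries.coeff_mk]
      refine Finset.sum_subset ?_ ?_
      · intro x hx
        rw [Finset.mem_range] at hx ⊢
        omega
      · intro n _ hn
        rw [Finset.mem_range, Nat.lt_succ_iff] at hn
        rw [hFn, if_neg (by omega), mul_zero]
    rw [Finset.sum_congr rfl fun j hj =>
      hsub j (by rw [Finset.mem_range, Nat.lt_succ_iff] at hj; exact hj)]
    rw [Finset.sum_comm]
    refine Finset.sum_congr rfl fun n hn => ?_
    rw [Finset.mem_range, Nat.lt_succ_iff] at hn
    -- inner sum over j equals coeff m (S * (C (β n) * F ^ n))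
    have : ∑ j ∈ Finset.range (m + 1),
        PowerSeries.coeff j (PowerSeries.C (β n) * F ^ n)
        = PowerSeries.coeff m
            (S * (PowerSeries.C (β n) * F ^ n)) := (coeff_S_mul _ m).symm
    rw [this]
    have hrw2 : S * (PowerSeries.C (β n) * F ^ n)
        = PowerSeries.C (β n * qv ^ n) * (PowerSeries.X ^ n * S ^ (n + 1)) := by
      rw [hF, S_inv, mul_pow, mul_pow, map_mul, map_pow, pow_succ]
      ring
    rw [hrw2, PowerSeries.coeff_C_mul, PowerSeries.coeff_X_pow_mul', if_pos hn,
      coeff_S_pow, Nat.add_sub_cancel' hn]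
    ring
  ext m
  rw [map_sub, key m, PowerSeries.coeff_mk, map_add]
  cases m with
  | zero =>
    simp [h.1, PowerSeries.coeff_zero_eq_constantCoeff]
  | succ m =>
    have hrec := h.2 (m + 1) (by omega)
    rw [hrec]
    rcases Nat.eq_zero_or_pos m with rfl | hm
    · simp
    · have h1 : (m + 1 : ℕ) ≠ 1 := by omega
      simp [h1, PowerSeries.coeff_C, PowerSeries.coeff_X, h1, Nat.succ_ne_zero,
        show m + 1 ≠ 1 from h1]
end
end

section
/- For integers 0 ≤ i ≤ d, the linear functional Ψ with Ψ(xⁿ) = βₙ satisfies Ψ([i,x;d]_q) = (−1)^{d−i} q^{−C(d−i,2)} / ([d+1]_q · qbinom(d,i)_q), where [i,x;d]_q = (1/[d]!_q)·∏_{t=1}^{d} ([i−d+t]_q + q^{i−d+t} x). -/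
open Finset Polynomial PowerSeries

noncomputable section

/-- The q-integer `[m]_q = (q^m − 1)/(q − 1)`, for `m : ℤ`. -/
def qint (m : ℤ) : RatFunc ℚ := (qv ^ m - 1) / (qv - 1)

/-- The q-factorial `[n]!_q`. -/
def qfact (n : ℕ) : RatFunc ℚ := ∏ t ∈ Finset.range n, qint (t + 1)

/-- The Gaussian binomial coefficient. -/
def qbinom (n k : ℕ) : RatFunc ℚ := qfact n / (qfact k * qfact (n - k))

/-- The linear functional `Ψ` on polynomials in `x`, sending `xⁿ` to `β n`. -/
def Psi (β : ℕ → RatFunc ℚ) (p : Polynomial (RatFunc ℚ)) : RatFunc ℚ :=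
  p.sum fun n a => a * β n

/-- The q-binomial polynomial
`[i, x; d]_q = (1/[d]!_q) ∏_{t=1}^{d} ([i−d+t]_q + q^{i−d+t} x)`. -/
def qbase (i d : ℕ) : Polynomial (RatFunc ℚ) :=
  Polynomial.C (qfact d)⁻¹ *
    ∏ t ∈ Finset.Icc 1 d,
      (Polynomial.C (qint ((i : ℤ) - d + t)) +
        Polynomial.C (qv ^ ((i : ℤ) - d + t)) * Polynomial.X)

lemma qv_ne_zero : qv ≠ 0 := RatFunc.X_ne_zero

lemma qv_pow_ne_one {n : ℕ} (hn : n ≠ 0) : qv ^ n ≠ 1 := by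
  intro hX
  have : (Polynomial.X : Polynomial ℚ) ^ n = 1 := by
    apply RatFunc.algebraMap_injective ℚ
    simpa [qv, RatFunc.algebraMap_X, map_pow] using hX
  have := congrArg Polynomial.natDegree this
  simp [Polynomial.natDegree_X_pow] at this
  exact hn this

lemma qv_sub_one_ne_zero : qv - 1 ≠ 0 := by
  intro hX
  have h1 : qv = 1 := by linear_combination hX
  exact qv_pow_ne_one (n := 1) one_ne_zero (by simpa using h1)

lemma qint_ne_zero {m : ℤ} (hm : m ≠ 0) : qint m ≠ 0 := by
  rw [qint, div_ne_zero_iff]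
  refine ⟨?_, qv_sub_one_ne_zero⟩
  intro hpow
  have hpow : qv ^ m = 1 := by linear_combination hpow
  rcases m.lt_or_lt_of_ne hm with hlt | hgt
  · obtain ⟨n, hn, hn0⟩ : ∃ n : ℕ, m = -(n:ℤ) ∧ n ≠ 0 := ⟨m.natAbs, by omega, by omega⟩
    rw [hn, zpow_neg, zpow_natCast, inv_eq_one] at hpow
    exact qv_pow_ne_one hn0 hpow
  · obtain ⟨n, hn, hn0⟩ : ∃ n : ℕ, m = (n:ℤ) ∧ n ≠ 0 := ⟨m.toNat, by omega, by omega⟩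
    rw [hn, zpow_natCast] at hpow
    exact qv_pow_ne_one hn0 hpow

lemma qfact_succ (n : ℕ) : qfact (n + 1) = qfact n * qint (n + 1) := by
  rw [qfact, Finset.prod_range_succ, qfact]

lemma qfact_ne_zero (n : ℕ) : qfact n ≠ 0 := by
  induction n with
  | zero => simp [qfact]
  | succ n ih =>
    rw [qfact_succ]
    exact mul_ne_zero ih (qint_ne_zero (by positivity))

lemma qint_zero : qint 0 = 0 := by simp [qint]

lemma qint_one : qint 1 = 1 := by
  rw [qint]
  simp only [zpow_one]
  exact div_self qv_sub_one_ne_zero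

lemma qint_succ (m : ℤ) : qint m + qv ^ m = qint (m + 1) := by
  rw [qint, qint, div_add' _ _ _ qv_sub_one_ne_zero, zpow_add_one₀ qv_ne_zero]
  ring_nf

lemma qint_neg (m : ℤ) : qint (-m) = -(qv ^ (-m)) * qint m := by
  have h : qv ^ m ≠ 0 := zpow_ne_zero m qv_ne_zero
  rw [qint, qint, zpow_neg]
  field_simp
  ring

lemma Psi_zero (β : ℕ → RatFunc ℚ) : Psi β 0 = 0 := Polynomial.sum_zero_index _

lemma Psi_add (β : ℕ → RatFunc ℚ) (p q : Polynomial (RatFunc ℚ)) :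
    Psi β (p + q) = Psi β p + Psi β q :=
  Polynomial.sum_add_index p q _ (fun n => zero_mul _) (fun n a b => add_mul a b _)

lemma Psi_C_mul (β : ℕ → RatFunc ℚ) (a : RatFunc ℚ) (p : Polynomial (RatFunc ℚ)) :
    Psi β (Polynomial.C a * p) = a * Psi β p := by
  rw [Psi, ← Polynomial.smul_eq_C_mul,
    Polynomial.sum_smul_index p a (fun n c => c * β n) (fun n => zero_mul _)]
  rw [Psi, Polynomial.sum_def, Polynomial.sum_def, Finset.mul_sum]
  exact Finset.sum_congr rfl fun n _ => mul_assoc _ _ _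

lemma Psi_monomial (β : ℕ → RatFunc ℚ) (a : RatFunc ℚ) (n : ℕ) :
    Psi β (Polynomial.C a * Polynomial.X ^ n) = a * β n := by
  rw [Polynomial.C_mul_X_pow_eq_monomial, Psi]
  exact Polynomial.sum_monomial_index a _ (zero_mul _)

lemma Psi_sum (β : ℕ → RatFunc ℚ) {ι : Type*} (s : Finset ι) (f : ι → Polynomial (RatFunc ℚ)) :
    Psi β (∑ i ∈ s, f i) = ∑ i ∈ s, Psi β (f i) := by
  induction s using Finset.cons_induction with
  | empty => simp [Psi_zero]
  | cons i s hi ih => rw [Finset.sum_cons, Finset.sum_cons, Psi_add, ih]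

def qsub : Polynomial (RatFunc ℚ) := Polynomial.C qv * Polynomial.X + 1

lemma Psi_qsub_pow (β : ℕ → RatFunc ℚ) (n : ℕ) :
    Psi β (qsub ^ n) = ∑ k ∈ Finset.range (n + 1), (n.choose k : RatFunc ℚ) * qv ^ k * β k := by
  rw [qsub, add_pow, Psi_sum]
  apply Finset.sum_congr rfl
  intro k _
  have : (Polynomial.C qv * Polynomial.X) ^ k * 1 ^ (n - k) * (n.choose k : Polynomial (RatFunc ℚ))
      = Polynomial.C ((n.choose k : RatFunc ℚ) * qv ^ k) * Polynomial.X ^ k := by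
    rw [mul_pow, ← Polynomial.C_pow, one_pow, mul_one, Polynomial.C_mul,
      ← Polynomial.C_eq_natCast]
    ring
  rw [this, Psi_monomial]

lemma psi_comp (β : ℕ → RatFunc ℚ) (h : IsCarlitz β) (p : Polynomial (RatFunc ℚ)) :
    qv * Psi β (p.comp qsub) = Psi β p + p.coeff 1 + (qv - 1) * p.coeff 0 := by
  induction p using Polynomial.induction_on' with
  | add p q hp hq =>
    rw [Polynomial.add_comp, Psi_add, Psi_add, Polynomial.coeff_add, Polynomial.coeff_add]
    linear_combination hp + hq
  | monomial n a =>
    rw [← Polynomial.C_mul_X_pow_eq_monomial, Polynomial.mul_comp, Polynomial.C_comp,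
      Polynomial.pow_comp, Polynomial.X_comp, Psi_C_mul, Psi_monomial, Psi_qsub_pow]
    rcases Nat.eq_zero_or_pos n with hn | hn
    · subst hn
      simp [h.1, Polynomial.coeff_C]
      ring
    · have hrec := h.2 n hn
      have hc1 : (Polynomial.C a * Polynomial.X ^ n).coeff 1 = if n = 1 then a else 0 := by
        rw [Polynomial.coeff_C_mul, Polynomial.coeff_X_pow]
        by_cases h1 : n = 1
        · simp [h1]
        · simp [h1, Ne.symm h1]
      have hc0 : (Polynomial.C a * Polynomial.X ^ n).coeff 0 = 0 := by
        rw [Polynomial.coeff_C_mul, Polynomial.coeff_X_pow]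
        simp; omega
      rw [hc1, hc0]
      by_cases hn1 : n = 1
      · rw [if_pos hn1] at hrec ⊢
        linear_combination a * hrec
      · rw [if_neg hn1] at hrec ⊢
        linear_combination a * hrec

lemma qfactor_comp (m : ℤ) :
    (Polynomial.C (qint m) + Polynomial.C (qv ^ m) * Polynomial.X).comp qsub
      = Polynomial.C (qint (m + 1)) + Polynomial.C (qv ^ (m + 1)) * Polynomial.X := by
  rw [qsub, Polynomial.add_comp, Polynomial.C_comp, Polynomial.mul_comp, Polynomial.C_comp,
    Polynomial.X_comp, ← qint_succ, zpow_add_one₀ qv_ne_zero, Polynomial.C_add,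
    Polynomial.C_mul]
  ring

lemma qbase_comp (i d : ℕ) : (qbase i d).comp qsub = qbase (i + 1) d := by
  rw [qbase, qbase, Polynomial.mul_comp, Polynomial.C_comp, Polynomial.prod_comp]
  congr 1
  apply Finset.prod_congr rfl
  intro t _
  rw [qfactor_comp]
  congr 2 <;> push_cast <;> ring

lemma psi_qbase_rec (β : ℕ → RatFunc ℚ) (h : IsCarlitz β) (i d : ℕ) :
    qv * Psi β (qbase (i + 1) d)
      = Psi β (qbase i d) + (qbase i d).coeff 1 + (qv - 1) * (qbase i d).coeff 0 := by
  rw [← qbase_comp, psi_comp β h]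

lemma prod_Icc_qint (m : ℕ) : ∏ k ∈ Finset.Icc 1 m, qint (k : ℤ) = qfact m := by
  induction m with
  | zero => simp [qfact]
  | succ m ih =>
    rw [Finset.prod_Icc_succ_top (by omega), ih, qfact_succ]
    push_cast
    ring

lemma prod_Icc_qint_neg (m : ℕ) :
    ∏ k ∈ Finset.Icc 1 m, qint (-(k : ℤ))
      = (-1) ^ m * qv ^ (-(((m + 1).choose 2 : ℕ) : ℤ)) * qfact m := by
  induction m with
  | zero => simp [qfact]
  | succ m ih =>
    rw [Finset.prod_Icc_succ_top (by omega), ih, qint_neg, qfact_succ]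
    have hch : ((m + 2).choose 2 : ℤ) = ((m + 1).choose 2 : ℤ) + (m + 1) := by
      rw [Nat.choose_succ_succ (m + 1) 1]
      push_cast [Nat.choose_one_right]
      ring
    have : qv ^ (-(((m + 2).choose 2 : ℕ) : ℤ))
        = qv ^ (-(((m + 1).choose 2 : ℕ) : ℤ)) * qv ^ (-((m : ℤ) + 1)) := by
      rw [← zpow_add₀ qv_ne_zero]
      congr 1
      push_cast [hch]
      ring
    rw [this]
    push_cast
    ring

lemma prod_shift (a i : ℕ) :
    ∏ t ∈ Finset.Icc (a + 1) (a + i), qint ((t : ℤ) - (a : ℤ)) = qfact i := by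
  induction i with
  | zero => simp [qfact]
  | succ i ih =>
    rw [show a + (i + 1) = (a + i) + 1 by ring, Finset.prod_Icc_succ_top (by omega), ih,
      qfact_succ]
    congr 1
    push_cast
    ring

lemma qbase_eq_X_mul {i d : ℕ} (hid : i < d) :
    qbase i d = Polynomial.C (qfact d)⁻¹ *
      (Polynomial.X * ∏ t ∈ (Finset.Icc 1 d).erase (d - i),
        (Polynomial.C (qint ((i : ℤ) - d + t)) +
          Polynomial.C (qv ^ ((i : ℤ) - d + t)) * Polynomial.X)) := by
  rw [qbase]
  congr 1
  rw [← Finset.mul_prod_erase (Finset.Icc 1 d) _ (by simp [Finset.mem_Icc]; omega :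
      d - i ∈ Finset.Icc 1 d)]
  congr 1
  have h0 : (i : ℤ) - d + ((d - i : ℕ) : ℤ) = 0 := by push_cast [Nat.cast_sub hid.le]; ring
  rw [h0, qint_zero, zpow_zero, map_zero, map_one, zero_add, one_mul]

lemma qbase_coeff_zero {i d : ℕ} (hid : i < d) : (qbase i d).coeff 0 = 0 := by
  rw [qbase_eq_X_mul hid, Polynomial.mul_coeff_zero, Polynomial.mul_coeff_zero,
    Polynomial.coeff_X_zero]
  ring

lemma qbase_coeff_one_prod {i d : ℕ} (hid : i < d) :
    (qbase i d).coeff 1 = (qfact d)⁻¹ *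
      ∏ t ∈ (Finset.Icc 1 d).erase (d - i), qint ((i : ℤ) - d + t) := by
  rw [qbase_eq_X_mul hid, Polynomial.coeff_C_mul]
  congr 1
  rw [show (1 : ℕ) = 0 + 1 from rfl, Polynomial.coeff_X_mul,
    Polynomial.coeff_zero_eq_eval_zero, Polynomial.eval_prod]
  apply Finset.prod_congr rfl
  intro t _
  simp

lemma qbase_coeff_one {i d : ℕ} (hid : i < d) :
    (qbase i d).coeff 1 = (-1) ^ (d - i - 1) * qv ^ (-(((d - i).choose 2 : ℕ) : ℤ)) *
      qfact i * qfact (d - i - 1) / qfact d := by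
  have hj1 : 1 ≤ d - i := by omega
  set j := d - i with hj
  have hsplit : (Finset.Icc 1 d).erase j = Finset.Icc 1 (j - 1) ∪ Finset.Icc (j + 1) d := by
    ext t
    simp only [Finset.mem_erase, Finset.mem_Icc, Finset.mem_union]
    omega
  have hdisj : Disjoint (Finset.Icc 1 (j - 1)) (Finset.Icc (j + 1) d) := by
    rw [Finset.disjoint_left]
    intro t ht ht'
    simp only [Finset.mem_Icc] at ht ht'
    omega
  rw [qbase_coeff_one_prod hid, hsplit, Finset.prod_union hdisj]
  have h2 : ∏ t ∈ Finset.Icc (j + 1) d, qint ((i : ℤ) - d + t) = qfact i := by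
    rw [show d = j + i by omega, ← prod_shift j i]
    apply Finset.prod_congr rfl
    intro t ht
    congr 1
    push_cast
    ring
  have h1 : ∏ t ∈ Finset.Icc 1 (j - 1), qint ((i : ℤ) - d + t)
      = (-1) ^ (j - 1) * qv ^ (-((j.choose 2 : ℕ) : ℤ)) * qfact (j - 1) := by
    have hji : (i : ℤ) - (d : ℤ) = -(j : ℤ) := by
      rw [hj]; push_cast [Nat.cast_sub hid.le]; ring
    have hre : ∏ t ∈ Finset.Icc 1 (j - 1), qint ((i : ℤ) - d + t)
        = ∏ k ∈ Finset.Icc 1 (j - 1), qint (-(k : ℤ)) := by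
      apply Finset.prod_nbij' (fun t => j - t) (fun k => j - k)
      · intro a ha; simp only [Finset.mem_Icc] at *; omega
      · intro a ha; simp only [Finset.mem_Icc] at *; omega
      · intro a ha; simp only [Finset.mem_Icc] at *; omega
      · intro a ha; simp only [Finset.mem_Icc] at *; omega
      · intro a ha
        simp only [Finset.mem_Icc] at ha
        congr 1
        rw [hji]
        push_cast [Nat.cast_sub (by omega : a ≤ j)]
        ring
    rw [hre, prod_Icc_qint_neg (j - 1), show j - 1 + 1 = j by omega]
  rw [h1, h2]
  field_simp

lemma qbase_zero_zero : qbase 0 0 = 1 := by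
  simp [qbase, qfact]

lemma qbase_self_eval_zero (d : ℕ) : (qbase d d).eval 0 = 1 := by
  rw [qbase, Polynomial.eval_mul, Polynomial.eval_C, Polynomial.eval_prod]
  have : ∀ t ∈ Finset.Icc 1 d,
      (Polynomial.C (qint ((d : ℤ) - d + t)) +
        Polynomial.C (qv ^ ((d : ℤ) - d + t)) * Polynomial.X).eval 0 = qint (t : ℤ) := by
    intro t _
    simp only [Polynomial.eval_add, Polynomial.eval_mul, Polynomial.eval_C, Polynomial.eval_X,
      mul_zero, add_zero]
    congr 1
    push_cast
    ring
  rw [Finset.prod_congr rfl this, prod_Icc_qint]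
  exact inv_mul_cancel₀ (qfact_ne_zero d)

lemma qbase_succ_diag (d : ℕ) :
    Polynomial.C (qint ((d : ℤ) + 1)) * qbase (d + 1) (d + 1)
      = qbase d d * (Polynomial.C (qint ((d : ℤ) + 1)) +
          Polynomial.C (qv ^ ((d : ℤ) + 1)) * Polynomial.X) := by
  have harg : ∀ a t : ℕ, ((a : ℕ) : ℤ) - ((a : ℕ) : ℤ) + (t : ℤ) = (t : ℤ) := by
    intros; ring
  rw [qbase, qbase]
  simp only [harg]
  rw [Finset.prod_Icc_succ_top (by omega : 1 ≤ d + 1), qfact_succ, mul_inv, Polynomial.C_mul]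
  have hne : qint ((d : ℤ) + 1) ≠ 0 := qint_ne_zero (by positivity)
  have hC : Polynomial.C (qint ((d : ℤ) + 1)) * Polynomial.C (qint ((d : ℤ) + 1))⁻¹
      = 1 := by
    rw [← Polynomial.C_mul, mul_inv_cancel₀ hne, Polynomial.C_1]
  push_cast
  linear_combination (Polynomial.C (qfact d)⁻¹ *
    (∏ t ∈ Finset.Icc 1 d, (Polynomial.C (qint (t : ℤ)) +
      Polynomial.C (qv ^ (t : ℤ)) * Polynomial.X)) *
    (Polynomial.C (qint ((d : ℤ) + 1)) + Polynomial.C (qv ^ ((d : ℤ) + 1)) * Polynomial.X)) * hC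

lemma qbase_lower (d : ℕ) :
    qbase d (d + 1) = Polynomial.C (qint ((d : ℤ) + 1))⁻¹ * (Polynomial.X * qbase d d) := by
  have harg : ∀ a t : ℕ, ((a : ℕ) : ℤ) - ((a : ℕ) : ℤ) + (t : ℤ) = (t : ℤ) := by
    intros; ring
  rw [qbase, qbase]
  simp only [harg]
  rw [← Finset.mul_prod_erase (Finset.Icc 1 (d + 1)) _
    (by simp [Finset.mem_Icc] : 1 ∈ Finset.Icc 1 (d + 1))]
  have h0 : (d : ℤ) - ((d + 1 : ℕ) : ℤ) + ((1 : ℕ) : ℤ) = 0 := by push_cast; ring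
  rw [h0, qint_zero, zpow_zero, map_zero, map_one, zero_add, one_mul]
  have her : (Finset.Icc 1 (d + 1)).erase 1 = Finset.Icc 2 (d + 1) := by
    ext t
    simp only [Finset.mem_erase, Finset.mem_Icc]
    omega
  have hre : ∏ t ∈ (Finset.Icc 1 (d + 1)).erase 1,
      (Polynomial.C (qint ((d : ℤ) - ((d + 1 : ℕ) : ℤ) + t)) +
        Polynomial.C (qv ^ ((d : ℤ) - ((d + 1 : ℕ) : ℤ) + t)) * Polynomial.X)
      = ∏ k ∈ Finset.Icc 1 d,
        (Polynomial.C (qint (k : ℤ)) + Polynomial.C (qv ^ (k : ℤ)) * Polynomial.X) := by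
    rw [her]
    apply Finset.prod_nbij' (fun t => t - 1) (fun k => k + 1)
    · intro a ha; simp only [Finset.mem_Icc] at *; omega
    · intro a ha; simp only [Finset.mem_Icc] at *; omega
    · intro a ha; simp only [Finset.mem_Icc] at *; omega
    · intro a ha; simp only [Finset.mem_Icc] at *; omega
    · intro a ha
      simp only [Finset.mem_Icc] at ha
      have : (d : ℤ) - ((d + 1 : ℕ) : ℤ) + a = ((a - 1 : ℕ) : ℤ) := by
        push_cast [Nat.cast_sub (by omega : 1 ≤ a)]
        ring
      rw [this]
  rw [hre, qfact_succ, mul_inv, Polynomial.C_mul]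
  ring

lemma qint_mul_sub_one (m : ℤ) : (qv - 1) * qint m = qv ^ m - 1 := by
  rw [qint, mul_div_assoc', mul_comm, mul_div_assoc, div_self qv_sub_one_ne_zero, mul_one]

lemma psi_qbase_self (β : ℕ → RatFunc ℚ) (h : IsCarlitz β) (d : ℕ) :
    Psi β (qbase d d) = 1 / qint ((d : ℤ) + 1) := by
  induction d with
  | zero =>
    rw [qbase_zero_zero]
    have h1 : (1 : Polynomial (RatFunc ℚ)) = Polynomial.C 1 * Polynomial.X ^ 0 := by simp
    rw [h1, Psi_monomial, h.1, Nat.cast_zero, zero_add, qint_one]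
    norm_num
  | succ d ih =>
    set A := Psi β (qbase d d) with hA
    set A' := Psi β (qbase (d + 1) (d + 1)) with hA'
    set B := Psi β (Polynomial.X * qbase d d) with hB
    set Q1 := qint ((d : ℤ) + 1) with hQ1
    set P := qv ^ ((d : ℤ) + 1) with hP
    have hQ1ne : Q1 ≠ 0 := qint_ne_zero (by positivity)
    have hPne : P ≠ 0 := zpow_ne_zero _ qv_ne_zero
    have hfne := qfact_ne_zero d
    -- coefficient of x in qbase d (d+1)
    have hc1 : (qbase d (d + 1)).coeff 1 = Q1⁻¹ := by
      rw [qbase_coeff_one (by omega), show d + 1 - d = 1 by omega]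
      simp only [pow_zero, Nat.choose_eq_zero_of_lt (by omega : 1 < 2), Nat.cast_zero, neg_zero,
        zpow_zero, one_mul, mul_one, show (1 : ℕ) - 1 = 0 by omega,
        show qfact 0 = 1 by simp [qfact], qfact_succ]
      rw [hQ1, div_mul_eq_div_div, div_self hfne, one_div]
    -- the recurrence
    have hrec := psi_qbase_rec β h d (d + 1)
    rw [qbase_coeff_zero (by omega), mul_zero, add_zero, hc1] at hrec
    -- Psi of qbase d (d+1)
    have hlow : Psi β (qbase d (d + 1)) = Q1⁻¹ * B := by
      rw [qbase_lower d, Psi_C_mul, hB, hQ1]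
    rw [hlow, ← hA'] at hrec
    -- Psi of the diagonal relation
    have hdiag : Q1 * A' = Q1 * A + P * B := by
      have h2 : Polynomial.C Q1 * qbase (d + 1) (d + 1)
          = Polynomial.C Q1 * qbase d d + Polynomial.C P * (Polynomial.X * qbase d d) := by
        rw [hQ1, hP, qbase_succ_diag]
        ring
      have h3 := congrArg (Psi β) h2
      rwa [Psi_C_mul, Psi_add, Psi_C_mul, Psi_C_mul, ← hA, ← hA', ← hB] at h3
    have hQ1A : Q1 * A = 1 := by
      rw [ih, mul_one_div, div_self hQ1ne]
    have hstep : Q1 * (qv * A') = B + 1 := by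
      rw [hrec]
      field_simp
    have h1 : (qv - 1) * Q1 = P - 1 := by rw [hQ1, hP, qint_mul_sub_one]
    have hgoal : A' = 1 / qint (((d + 1 : ℕ) : ℤ) + 1) := by
      have hcast : ((d + 1 : ℕ) : ℤ) + 1 = ((d : ℤ) + 1) + 1 := by push_cast; ring
      rw [hcast]
      set Q2 := qint (((d : ℤ) + 1) + 1) with hQ2
      have hQ2ne : Q2 ≠ 0 := qint_ne_zero (by positivity)
      have h2 : (qv - 1) * Q2 = P * qv - 1 := by
        rw [hQ2, hP, qint_mul_sub_one, ← zpow_add_one₀ qv_ne_zero]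
      have main : P * Q1 * (qv * A') = Q1 * A' - 1 + P := by
        linear_combination P * hstep - hdiag - hQ1A
      have step : Q1 * (A' * (P * qv - 1) - (qv - 1)) = 0 := by
        linear_combination main - h1
      have hel : A' * (P * qv - 1) - (qv - 1) = 0 :=
        (mul_eq_zero.mp step).resolve_left hQ1ne
      rw [eq_div_iff hQ2ne]
      have step2 : (qv - 1) * (A' * Q2 - 1) = 0 := by
        linear_combination A' * h2 + hel
      have := (mul_eq_zero.mp step2).resolve_left qv_sub_one_ne_zero
      linear_combination this
    exact hgoal

lemma psi_qbase_aux (β : ℕ → RatFunc ℚ) (h : IsCarlitz β) :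
    ∀ j i d : ℕ, i + j = d →
      Psi β (qbase i d) = (-1) ^ j * qv ^ (-((j.choose 2 : ℕ) : ℤ)) /
        (qint ((d : ℤ) + 1) * qbinom d i) := by
  intro j
  induction j with
  | zero =>
    intro i d hij
    have hd : i = d := by omega
    subst hd
    rw [psi_qbase_self β h, qbinom, Nat.sub_self, show qfact 0 = 1 by simp [qfact], mul_one,
      div_self (qfact_ne_zero i)]
    norm_num
  | succ j ih =>
    intro i d hij
    have hid : i < d := by omega
    have hrec := psi_qbase_rec β h i d
    rw [qbase_coeff_zero hid, mul_zero, add_zero, qbase_coeff_one hid,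
      show d - i = j + 1 by omega, show j + 1 - 1 = j by omega] at hrec
    have hIH := ih (i + 1) d (by omega)
    -- atoms and relations
    set W := qv ^ (-((j.choose 2 : ℕ) : ℤ)) with hW
    set V := qv ^ (-(j : ℤ)) with hV
    set U := qv ^ ((j : ℤ) + 1) with hU
    set Fi := qfact i with hFi
    set Fj := qfact j with hFj
    set Fd := qfact d with hFd
    set Q := qint ((d : ℤ) + 1) with hQ
    set qI := qint ((i : ℤ) + 1) with hqI
    set qJ := qint ((j : ℤ) + 1) with hqJ
    have hWne : W ≠ 0 := zpow_ne_zero _ qv_ne_zero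
    have hVne : V ≠ 0 := zpow_ne_zero _ qv_ne_zero
    have hUne : U ≠ 0 := zpow_ne_zero _ qv_ne_zero
    have hFine : Fi ≠ 0 := qfact_ne_zero i
    have hFjne : Fj ≠ 0 := qfact_ne_zero j
    have hFdne : Fd ≠ 0 := qfact_ne_zero d
    have hQne : Q ≠ 0 := qint_ne_zero (by positivity)
    have hqIne : qI ≠ 0 := qint_ne_zero (by positivity)
    have hqJne : qJ ≠ 0 := qint_ne_zero (by positivity)
    have hUV : U * V = qv := by
      rw [hU, hV, ← zpow_add₀ qv_ne_zero, show (j : ℤ) + 1 + -(j : ℤ) = 1 by ring, zpow_one]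
    have hpow : U * qv ^ ((i : ℤ) + 1) = qv ^ ((d : ℤ) + 1) := by
      rw [hU, ← zpow_add₀ qv_ne_zero]
      congr 1
      omega
    have key : U * qI + qJ = Q := by
      have h1 := qint_mul_sub_one ((i : ℤ) + 1)
      have h2 := qint_mul_sub_one ((j : ℤ) + 1)
      have h3 := qint_mul_sub_one ((d : ℤ) + 1)
      have step : (qv - 1) * (U * qI + qJ - Q) = 0 := by
        linear_combination U * h1 + h2 - h3 + hpow
      have := (mul_eq_zero.mp step).resolve_left qv_sub_one_ne_zero
      linear_combination this
    have hWsplit : qv ^ (-(((j + 1).choose 2 : ℕ) : ℤ)) = W * V := by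
      rw [hW, hV, ← zpow_add₀ qv_ne_zero]
      congr 1
      have : (j + 1).choose 2 = j.choose 2 + j := by
        simp [Nat.choose_succ_succ, Nat.choose_one_right, Nat.add_comm]
      rw [this]
      push_cast
      ring
    rw [hWsplit] at hrec
    have hfsucc_i : qfact (i + 1) = Fi * qI := by
      rw [qfact_succ, hFi, hqI]
    have hfsucc_j : qfact (j + 1) = Fj * qJ := by
      rw [qfact_succ, hFj, hqJ]
    rw [qbinom, show d - (i + 1) = j by omega, hfsucc_i, ← hFj, ← hFd] at hIH
    have hPsi : Psi β (qbase i d)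
        = qv * Psi β (qbase (i + 1) d) - (-1) ^ j * (W * V) * Fi * Fj / Fd := by
      linear_combination -hrec
    rw [hIH] at hPsi
    rw [hPsi, hWsplit, qbinom, show d - i = j + 1 by omega, hfsucc_j, ← hFi, ← hFd]
    rw [← hUV]
    field_simp
    ring_nf
    linear_combination ((-1) ^ j) * key

theorem psi_qbase (β : ℕ → RatFunc ℚ) (h : IsCarlitz β) (i d : ℕ) (hid : i ≤ d) :
    Psi β (qbase i d) =
      (-1) ^ (d - i) * qv ^ (-(((d - i).choose 2 : ℕ) : ℤ)) /
        (qint (d + 1) * qbinom d i) := by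
  exact psi_qbase_aux β h (d - i) i d (by omega)
end
end

section
/- For every k ≥ 0, Ψ([k,x;k+1]_q) = −1/([k+1]_q [k+2]_q), where [k,x;k+1]_q = (1/[k+1]!_q)·x·∏_{t=1}^{k}([t]_q + qᵗx). -/
open Finset Polynomial PowerSeries

noncomputable section

namespace CarlitzAux

lemma qv_pow_ne_one {m : ℕ} (hm : 1 ≤ m) : qv ^ m ≠ 1 := by
  have hX : qv = algebraMap (Polynomial ℚ) (RatFunc ℚ) Polynomial.X :=
    (RatFunc.algebraMap_X (K := ℚ)).symm
  rw [hX, ← map_pow, ← map_one (algebraMap (Polynomial ℚ) (RatFunc ℚ))]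
  intro hcon
  have h2 : (Polynomial.X : Polynomial ℚ) ^ m = 1 :=
    RatFunc.algebraMap_injective ℚ hcon
  have h3 := congrArg Polynomial.natDegree h2
  simp [Polynomial.natDegree_X_pow] at h3
  omega

lemma qv_ne_one : qv ≠ 1 := by
  have := qv_pow_ne_one (m := 1) le_rfl
  simpa using this

lemma qv_sub_one_ne : qv - 1 ≠ 0 := sub_ne_zero.mpr qv_ne_one

lemma qintN (n : ℕ) : qint (n : ℤ) = (qv ^ n - 1) / (qv - 1) := by
  rw [qint, zpow_natCast]

lemma qint_ne {m : ℕ} (hm : 1 ≤ m) : qint (m : ℤ) ≠ 0 := by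
  rw [qintN]
  exact div_ne_zero (sub_ne_zero.mpr (qv_pow_ne_one hm)) qv_sub_one_ne

lemma qint_one : qint (1 : ℤ) = 1 := by
  rw [qint, zpow_one, div_self qv_sub_one_ne]

lemma qint_zero : qint (0 : ℤ) = 0 := by
  simp [qint]

lemma qint_succ (n : ℕ) : qint ((n : ℤ) + 1) = qint (n : ℤ) + qv ^ n := by
  have h1 : ((n : ℤ) + 1) = ((n + 1 : ℕ) : ℤ) := by push_cast; ring
  rw [h1, qintN, qintN]
  have hq := qv_sub_one_ne
  field_simp
  ring

lemma qint_succ' (s : ℕ) : qint (((s + 1 : ℕ) : ℤ)) = qint (s : ℤ) + qv ^ s := by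
  have h1 : ((s + 1 : ℕ) : ℤ) = ((s : ℤ) + 1) := by push_cast; ring
  rw [h1, qint_succ]

lemma qfact_ne (n : ℕ) : qfact n ≠ 0 := by
  unfold qfact
  refine Finset.prod_ne_zero_iff.2 fun t _ => ?_
  have h1 : ((t : ℤ) + 1) = ((t + 1 : ℕ) : ℤ) := by push_cast; ring
  rw [h1]
  exact qint_ne (Nat.le_add_left 1 t)

lemma qfact_succ (n : ℕ) : qfact (n + 1) = qfact n * qint ((n : ℤ) + 1) := by
  unfold qfact
  rw [Finset.prod_range_succ]

/-- `Psi` as a linear map. -/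
def PsiL (β : ℕ → RatFunc ℚ) : Polynomial (RatFunc ℚ) →ₗ[RatFunc ℚ] RatFunc ℚ :=
  Polynomial.lsum (fun n => LinearMap.mulRight (RatFunc ℚ) (β n))

lemma Psi_eq (β : ℕ → RatFunc ℚ) (p : Polynomial (RatFunc ℚ)) :
    Psi β p = PsiL β p := rfl

lemma Psi_add (β : ℕ → RatFunc ℚ) (p q : Polynomial (RatFunc ℚ)) :
    Psi β (p + q) = Psi β p + Psi β q := by
  simp [Psi_eq, map_add]

lemma Psi_Cmul (β : ℕ → RatFunc ℚ) (a : RatFunc ℚ) (p : Polynomial (RatFunc ℚ)) :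
    Psi β (Polynomial.C a * p) = a * Psi β p := by
  by_cases ha : a = 0
  · simp [ha, Psi]
  · unfold Psi
    rw [Polynomial.sum_def, Polynomial.sum_def, Finset.mul_sum]
    have hsupp : (Polynomial.C a * p).support = p.support := by
      ext n
      simp [Polynomial.mem_support_iff, Polynomial.coeff_C_mul, ha]
    rw [hsupp]
    refine Finset.sum_congr rfl fun n _ => ?_
    rw [Polynomial.coeff_C_mul]
    ring

lemma Psi_sum (β : ℕ → RatFunc ℚ) {ι : Type*} (s : Finset ι)
    (f : ι → Polynomial (RatFunc ℚ)) :
    Psi β (∑ i ∈ s, f i) = ∑ i ∈ s, Psi β (f i) := by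
  simp [Psi_eq, map_sum]

lemma Psi_monomial (β : ℕ → RatFunc ℚ) (n : ℕ) (a : RatFunc ℚ) :
    Psi β (Polynomial.monomial n a) = a * β n := by
  unfold Psi
  exact Polynomial.sum_monomial_index a _ (zero_mul _)

lemma Psi_C (β : ℕ → RatFunc ℚ) (a : RatFunc ℚ) :
    Psi β (Polynomial.C a) = a * β 0 := by
  rw [← Polynomial.monomial_zero_left, Psi_monomial]

/-- Binomial expansion of `(q·X + 1)^n` as a sum of monomials. -/
lemma shift_pow (n : ℕ) :
    (Polynomial.C qv * Polynomial.X + 1 : Polynomial (RatFunc ℚ)) ^ n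
      = ∑ k ∈ Finset.range (n + 1),
          Polynomial.monomial k ((n.choose k : RatFunc ℚ) * qv ^ k) := by
  rw [add_pow]
  refine Finset.sum_congr rfl fun k _ => ?_
  rw [mul_pow, one_pow, mul_one, ← Polynomial.C_pow, ← Polynomial.C_eq_natCast,
    mul_comm (Polynomial.C (qv ^ k) * Polynomial.X ^ k), ← mul_assoc, ← Polynomial.C_mul,
    Polynomial.C_mul_X_pow_eq_monomial]

/-- The umbral functional equation, extended to all polynomials. -/
lemma funceq (β : ℕ → RatFunc ℚ) (h : IsCarlitz β) (p : Polynomial (RatFunc ℚ)) :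
    qv * Psi β (p.comp (Polynomial.C qv * Polynomial.X + 1)) - Psi β p
      = p.coeff 1 + (qv - 1) * p.coeff 0 := by
  induction p using Polynomial.induction_on' with
  | add p q hp hq =>
    rw [Polynomial.add_comp, Psi_add, Psi_add, Polynomial.coeff_add, Polynomial.coeff_add]
    linear_combination hp + hq
  | monomial n a =>
    rw [Polynomial.monomial_comp, shift_pow, Finset.mul_sum]
    rw [Psi_sum]
    have hterm : ∀ k ∈ Finset.range (n + 1),
        Psi β (Polynomial.C a * Polynomial.monomial k ((n.choose k : RatFunc ℚ) * qv ^ k))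
          = a * ((n.choose k : RatFunc ℚ) * qv ^ k * β k) := by
      intro k _
      rw [Psi_Cmul, Psi_monomial]
      try ring
    rw [Finset.sum_congr rfl hterm, Psi_monomial]
    have hmulsum : ∑ k ∈ Finset.range (n + 1), a * ((n.choose k : RatFunc ℚ) * qv ^ k * β k)
        = a * ∑ k ∈ Finset.range (n + 1), ((n.choose k : RatFunc ℚ) * qv ^ k * β k) := by
      rw [Finset.mul_sum]
    rw [hmulsum]
    rcases Nat.eq_zero_or_pos n with h0 | hn
    · subst h0
      simp [h.1, Polynomial.coeff_monomial]
      try ring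
    · have key := h.2 n hn
      have hn0 : n ≠ 0 := Nat.one_le_iff_ne_zero.mp hn
      by_cases h1 : n = 1
      · subst h1
        norm_num at key
        simp only [Polynomial.coeff_monomial, if_pos rfl, Nat.one_ne_zero, if_neg hn0]
        norm_num
        linear_combination a * key
      · rw [if_neg h1] at key
        simp only [Polynomial.coeff_monomial, if_neg h1, if_neg hn0, mul_zero, add_zero]
        linear_combination a * key

/-- The factor `[s]_q + q^s·X`. -/
def g (s : ℕ) : Polynomial (RatFunc ℚ) :=
  Polynomial.C (qint (s : ℤ)) + Polynomial.C (qv ^ s) * Polynomial.X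

lemma g_zero : g 0 = Polynomial.X := by
  simp [g, qint_zero]

/-- The polynomial `p_k = ∏_{t=1}^k ([t]_q + q^t X)`. -/
def Pk (k : ℕ) : Polynomial (RatFunc ℚ) := ∏ t ∈ Finset.range k, g (t + 1)

lemma g_comp (s : ℕ) :
    (g s).comp (Polynomial.C qv * Polynomial.X + 1) = g (s + 1) := by
  simp only [g, Polynomial.add_comp, Polynomial.mul_comp, Polynomial.C_comp,
    Polynomial.X_comp, qint_succ', map_add, pow_succ, map_mul]
  ring

lemma comp_XPk (k : ℕ) :
    (Polynomial.X * Pk k).comp (Polynomial.C qv * Polynomial.X + 1) = Pk (k + 1) := by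
  rw [Polynomial.mul_comp, Polynomial.X_comp]
  unfold Pk
  rw [Polynomial.prod_comp]
  rw [Finset.prod_congr rfl (fun t _ => g_comp (t + 1))]
  rw [Finset.prod_range_succ']
  have h2 : g 1 = (Polynomial.C qv * Polynomial.X + 1 : Polynomial (RatFunc ℚ)) := by
    unfold g
    rw [show ((1 : ℕ) : ℤ) = (1 : ℤ) by norm_num, qint_one, Polynomial.C_1, pow_one]
    ring
  rw [← h2]
  try exact mul_comm _ _

lemma coeff_zero_Pk (k : ℕ) : (Pk k).coeff 0 = qfact k := by
  rw [Polynomial.coeff_zero_eq_eval_zero, Pk, Polynomial.eval_prod]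
  unfold qfact
  refine Finset.prod_congr rfl fun t _ => ?_
  simp [g]

lemma coeff_one_XPk (k : ℕ) : (Polynomial.X * Pk k).coeff 1 = qfact k := by
  rw [show (1 : ℕ) = 0 + 1 by rfl, Polynomial.coeff_X_mul, coeff_zero_Pk]

lemma coeff_zero_XPk (k : ℕ) : (Polynomial.X * Pk k).coeff 0 = 0 := by
  rw [Polynomial.mul_coeff_zero]
  simp

lemma Pk_succ (k : ℕ) :
    Pk (k + 1) = Polynomial.C (qint ((k : ℤ) + 1)) * Pk k
      + Polynomial.C (qv ^ (k + 1)) * (Polynomial.X * Pk k) := by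
  rw [Pk, Finset.prod_range_succ, ← Pk]
  have hg : g (k + 1) = Polynomial.C (qint ((k : ℤ) + 1))
      + Polynomial.C (qv ^ (k + 1)) * Polynomial.X := by
    unfold g
    push_cast
    ring_nf
  rw [hg]
  ring

/-- Main induction: `Ψ(p_k) = [k]!_q / [k+1]_q`. -/
lemma psiP (β : ℕ → RatFunc ℚ) (h : IsCarlitz β) :
    ∀ k : ℕ, Psi β (Pk k) = qfact k / qint ((k : ℤ) + 1) := by
  intro k
  induction k with
  | zero =>
    have hP : Pk 0 = Polynomial.C 1 := by simp [Pk]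
    rw [hP, Psi_C, h.1]
    norm_num [qfact, qint_one]
  | succ k ih =>
    have E1 := funceq β h (Polynomial.X * Pk k)
    rw [comp_XPk, coeff_one_XPk, coeff_zero_XPk, mul_zero, add_zero] at E1
    set B := Psi β (Polynomial.X * Pk k) with hB
    have E2 : Psi β (Pk (k + 1))
        = qint ((k : ℤ) + 1) * Psi β (Pk k) + qv ^ (k + 1) * B := by
      rw [Pk_succ, Psi_add, Psi_Cmul, Psi_Cmul]
    rw [E2, ih] at E1 ⊢
    push_cast
    rw [qfact_succ]
    have hcast1 : qint ((k : ℤ) + 1) = (qv ^ (k + 1) - 1) / (qv - 1) := by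
      rw [show ((k : ℤ) + 1) = ((k + 1 : ℕ) : ℤ) by push_cast; ring, qintN]
    have hcast2 : qint ((k : ℤ) + 1 + 1) = (qv ^ (k + 2) - 1) / (qv - 1) := by
      rw [show ((k : ℤ) + 1 + 1) = ((k + 2 : ℕ) : ℤ) by push_cast; ring, qintN]
    have hq1 := qv_sub_one_ne
    have hF := qfact_ne k
    have hpow1 : qv ^ (k + 1) - 1 ≠ 0 :=
      sub_ne_zero.mpr (qv_pow_ne_one (Nat.le_add_left 1 k))
    have hpow2 : qv ^ (k + 2) - 1 ≠ 0 :=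
      sub_ne_zero.mpr (qv_pow_ne_one (Nat.le_add_left 1 (k + 1)))
    rw [hcast1] at E1
    rw [hcast1, hcast2]
    have hdc : (qv ^ (k + 1) - 1) / (qv - 1) * (qfact k / ((qv ^ (k + 1) - 1) / (qv - 1)))
        = qfact k := by
      rw [mul_comm, div_mul_cancel₀]
      exact div_ne_zero hpow1 hq1
    rw [hdc] at E1 ⊢
    have hBval : B = -((qv - 1) * qfact k) / (qv ^ (k + 2) - 1) := by
      field_simp
      linear_combination E1
    rw [hBval]
    field_simp
    ring

lemma psiR (β : ℕ → RatFunc ℚ) (h : IsCarlitz β) (k : ℕ) :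
    Psi β (Polynomial.X * Pk k) = -qfact k / qint ((k : ℤ) + 2) := by
  have E1 := funceq β h (Polynomial.X * Pk k)
  rw [comp_XPk, coeff_one_XPk, coeff_zero_XPk, mul_zero, add_zero] at E1
  rw [psiP β h (k + 1), qfact_succ] at E1
  have hcast1 : qint ((k : ℤ) + 1) = (qv ^ (k + 1) - 1) / (qv - 1) := by
    rw [show ((k : ℤ) + 1) = ((k + 1 : ℕ) : ℤ) by push_cast; ring, qintN]
  have hcast2 : qint ((k : ℤ) + 2) = (qv ^ (k + 2) - 1) / (qv - 1) := by
    rw [show ((k : ℤ) + 2) = ((k + 2 : ℕ) : ℤ) by push_cast; ring, qintN]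
  have hcast2' : qint (((k + 1 : ℕ) : ℤ) + 1) = (qv ^ (k + 2) - 1) / (qv - 1) := by
    rw [show (((k + 1 : ℕ) : ℤ) + 1) = ((k + 2 : ℕ) : ℤ) by push_cast; ring, qintN]
  have hq1 := qv_sub_one_ne
  have hF := qfact_ne k
  have hpow1 : qv ^ (k + 1) - 1 ≠ 0 :=
    sub_ne_zero.mpr (qv_pow_ne_one (Nat.le_add_left 1 k))
  have hpow2 : qv ^ (k + 2) - 1 ≠ 0 :=
    sub_ne_zero.mpr (qv_pow_ne_one (Nat.le_add_left 1 (k + 1)))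
  rw [hcast1, hcast2'] at E1
  rw [hcast2]
  field_simp at E1 ⊢
  linear_combination -E1

lemma qbase_eq (k : ℕ) :
    qbase k (k + 1) = Polynomial.C (qfact (k + 1))⁻¹ * (Polynomial.X * Pk k) := by
  unfold qbase
  congr 1
  have hIcc : Finset.Icc 1 (k + 1) = Finset.Ico 1 (k + 2) := by
    exact (Finset.Ico_add_one_right_eq_Icc (a := 1) (b := k + 1)).symm
  rw [hIcc, Finset.prod_Ico_eq_prod_range]
  have hterm : ∀ t ∈ Finset.range (k + 2 - 1),
      (Polynomial.C (qint ((k : ℤ) - (k + 1 : ℕ) + (1 + t : ℕ)))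
        + Polynomial.C (qv ^ ((k : ℤ) - (k + 1 : ℕ) + (1 + t : ℕ))) * Polynomial.X)
      = g t := by
    intro t _
    have harg : ((k : ℤ) - (k + 1 : ℕ) + (1 + t : ℕ)) = (t : ℤ) := by push_cast; ring
    rw [harg]
    unfold g
    rw [zpow_natCast]
  rw [Finset.prod_congr rfl hterm]
  rw [show k + 2 - 1 = k + 1 by omega]
  rw [Finset.prod_range_succ']
  rw [g_zero, Pk]
  ring

end CarlitzAux

theorem psi_qbase_subdiag (β : ℕ → RatFunc ℚ) (h : IsCarlitz β) (k : ℕ) :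
    Psi β (qbase k (k + 1)) = -1 / (qint (k + 1) * qint (k + 2)) := by
  rw [CarlitzAux.qbase_eq, CarlitzAux.Psi_Cmul, CarlitzAux.psiR β h k]
  rw [CarlitzAux.qfact_succ]
  have hcast1 : qint ((k : ℤ) + 1) = (qv ^ (k + 1) - 1) / (qv - 1) := by
    rw [show ((k : ℤ) + 1) = ((k + 1 : ℕ) : ℤ) by push_cast; ring, CarlitzAux.qintN]
  have hcast2 : qint ((k : ℤ) + 2) = (qv ^ (k + 2) - 1) / (qv - 1) := by
    rw [show ((k : ℤ) + 2) = ((k + 2 : ℕ) : ℤ) by push_cast; ring, CarlitzAux.qintN]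
  have hq1 := CarlitzAux.qv_sub_one_ne
  have hF := CarlitzAux.qfact_ne k
  have hpow1 : qv ^ (k + 1) - 1 ≠ 0 :=
    sub_ne_zero.mpr (CarlitzAux.qv_pow_ne_one (Nat.le_add_left 1 k))
  have hpow2 : qv ^ (k + 2) - 1 ≠ 0 :=
    sub_ne_zero.mpr (CarlitzAux.qv_pow_ne_one (Nat.le_add_left 1 (k + 1)))
  rw [hcast1, hcast2]
  field_simp
end
end

section
/- (Rogers' contraction of continued fractions) For a sequence (cₖ)_{k≥1}, the Stieltjes continued fraction 1/(1 + c₁x/(1 + c₂x/(1 + c₃x/⋯))) equals the Jacobi continued fraction 1/(1 + c₁x − c₁c₂x²/(1 + (c₂+c₃)x − c₃c₄x²/(1 + (c₄+c₅)x − ⋯))), in the sense that for each n ≥ 1 the n-th convergents agree up to order xⁿ (equivalently, the associated formal power series coincide). -/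
noncomputable section

/-- The depth-`d` convergent of the Stieltjes continued fraction
`1/(1 + cᵢx/(1 + cᵢ₊₁x/(1 + ⋯)))`, starting at index `i`, as a formal power series. -/
def Sconv {K : Type*} [Field K] (c : ℕ → K) : ℕ → ℕ → PowerSeries K
  | _, 0 => 1
  | i, d + 1 => (1 + PowerSeries.C (c i) * PowerSeries.X * Sconv c (i + 1) d)⁻¹

/-- The depth-`d` convergent of the contracted Jacobi continued fraction
`1/(1 + c₁x − c₁c₂x²/(1 + (c₂+c₃)x − c₃c₄x²/(1 + (c₄+c₅)x − ⋯)))`,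
starting at level `m` (level `0` has linear coefficient `c₁`,
level `m ≥ 1` has linear coefficient `c_{2m} + c_{2m+1}`). -/
def Jconv {K : Type*} [Field K] (c : ℕ → K) : ℕ → ℕ → PowerSeries K
  | _, 0 => 1
  | m, d + 1 =>
      (1 + PowerSeries.C (if m = 0 then c 1 else c (2 * m) + c (2 * m + 1))
            * PowerSeries.X
         - PowerSeries.C (c (2 * m + 1) * c (2 * m + 2)) * PowerSeries.X ^ 2
            * Jconv c (m + 1) d)⁻¹

namespace RogersAux

open PowerSeries

variable {K : Type*} [Field K] (c : ℕ → K)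

lemma one_inv : ((1 : PowerSeries K))⁻¹ = 1 := by
  have h := PowerSeries.mul_inv_cancel (1 : PowerSeries K) (by simp)
  simpa using h

lemma constS : ∀ d i, constantCoeff (Sconv c i d) = 1 := by
  intro d
  induction d with
  | zero => intro i; simp [Sconv]
  | succ d ih =>
    intro i
    rw [show Sconv c i (d + 1)
        = (1 + PowerSeries.C (c i) * X * Sconv c (i + 1) d)⁻¹ from rfl,
      PowerSeries.constantCoeff_inv]
    simp [ih]

lemma constJ : ∀ d m, constantCoeff (Jconv c m d) = 1 := by
  intro d
  induction d with
  | zero => intro m; simp [Jconv]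
  | succ d ih =>
    intro m
    rw [show Jconv c m (d + 1)
        = (1 + PowerSeries.C (if m = 0 then c 1 else c (2 * m) + c (2 * m + 1)) * X
            - PowerSeries.C (c (2 * m + 1) * c (2 * m + 2)) * X ^ 2
              * Jconv c (m + 1) d)⁻¹ from rfl,
      PowerSeries.constantCoeff_inv]
    simp [ih]

lemma inv_sub_inv {a b : PowerSeries K} {k : ℕ}
    (ha : constantCoeff a = 1) (hb : constantCoeff b = 1)
    (h : X ^ k ∣ a - b) : X ^ k ∣ a⁻¹ - b⁻¹ := by
  obtain ⟨t, ht⟩ := h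
  have h1 : a * a⁻¹ = 1 := PowerSeries.mul_inv_cancel a (by rw [ha]; exact one_ne_zero)
  have h2 : b * b⁻¹ = 1 := PowerSeries.mul_inv_cancel b (by rw [hb]; exact one_ne_zero)
  refine ⟨-(a⁻¹ * t * b⁻¹), ?_⟩
  linear_combination b⁻¹ * h1 - a⁻¹ * h2 - a⁻¹ * b⁻¹ * ht

lemma S_trunc : ∀ d i, X ^ (d + 1) ∣ Sconv c i (d + 1) - Sconv c i d := by
  intro d
  induction d with
  | zero =>
    intro i
    rw [show Sconv c i 0 = (1 : PowerSeries K)⁻¹ from by rw [one_inv]; rfl,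
      show Sconv c i 1 = (1 + PowerSeries.C (c i) * X * Sconv c (i + 1) 0)⁻¹ from rfl]
    refine inv_sub_inv (by simp [constS]) (by simp) ?_
    refine ⟨PowerSeries.C (c i) * Sconv c (i + 1) 0, ?_⟩
    ring
  | succ d ih =>
    intro i
    rw [show Sconv c i (d + 1 + 1)
        = (1 + PowerSeries.C (c i) * X * Sconv c (i + 1) (d + 1))⁻¹ from rfl,
      show Sconv c i (d + 1)
        = (1 + PowerSeries.C (c i) * X * Sconv c (i + 1) d)⁻¹ from rfl]
    refine inv_sub_inv (by simp [constS]) (by simp [constS]) ?_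
    obtain ⟨t, ht⟩ := ih (i + 1)
    refine ⟨PowerSeries.C (c i) * t, ?_⟩
    linear_combination (PowerSeries.C (c i) * X) * ht

lemma S_trunc_le {d e : ℕ} (i : ℕ) (h : d ≤ e) :
    X ^ (d + 1) ∣ Sconv c i e - Sconv c i d := by
  induction e, h using Nat.le_induction with
  | base => simp
  | succ e he ih =>
    have h1 : X ^ (d + 1) ∣ Sconv c i (e + 1) - Sconv c i e :=
      dvd_trans (pow_dvd_pow X (by omega)) (S_trunc c e i)
    have h2 := dvd_add h1 ih
    simpa using h2

lemma J_trunc : ∀ d m, X ^ (2 * d + 1) ∣ Jconv c m (d + 1) - Jconv c m d := by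
  intro d
  induction d with
  | zero =>
    intro m
    rw [show Jconv c m 0 = (1 : PowerSeries K)⁻¹ from by rw [one_inv]; rfl,
      show Jconv c m 1
        = (1 + PowerSeries.C (if m = 0 then c 1 else c (2 * m) + c (2 * m + 1)) * X
            - PowerSeries.C (c (2 * m + 1) * c (2 * m + 2)) * X ^ 2
              * Jconv c (m + 1) 0)⁻¹ from rfl]
    refine inv_sub_inv (by simp [constJ]) (by simp) ?_
    refine ⟨PowerSeries.C (if m = 0 then c 1 else c (2 * m) + c (2 * m + 1))
      - PowerSeries.C (c (2 * m + 1) * c (2 * m + 2)) * X * Jconv c (m + 1) 0, ?_⟩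
    ring
  | succ d ih =>
    intro m
    rw [show Jconv c m (d + 1 + 1)
        = (1 + PowerSeries.C (if m = 0 then c 1 else c (2 * m) + c (2 * m + 1)) * X
            - PowerSeries.C (c (2 * m + 1) * c (2 * m + 2)) * X ^ 2
              * Jconv c (m + 1) (d + 1))⁻¹ from rfl,
      show Jconv c m (d + 1)
        = (1 + PowerSeries.C (if m = 0 then c 1 else c (2 * m) + c (2 * m + 1)) * X
            - PowerSeries.C (c (2 * m + 1) * c (2 * m + 2)) * X ^ 2
              * Jconv c (m + 1) d)⁻¹ from rfl]
    refine inv_sub_inv (by simp [constJ]) (by simp [constJ]) ?_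
    obtain ⟨t, ht⟩ := ih (m + 1)
    refine ⟨-(PowerSeries.C (c (2 * m + 1) * c (2 * m + 2)) * t), ?_⟩
    linear_combination (-(PowerSeries.C (c (2 * m + 1) * c (2 * m + 2)) * X ^ 2)) * ht

lemma J_trunc_le {d e : ℕ} (m : ℕ) (h : d ≤ e) :
    X ^ (2 * d + 1) ∣ Jconv c m e - Jconv c m d := by
  induction e, h using Nat.le_induction with
  | base => simp
  | succ e he ih =>
    have h1 : X ^ (2 * d + 1) ∣ Jconv c m (e + 1) - Jconv c m e :=
      dvd_trans (pow_dvd_pow X (by omega)) (J_trunc c e m)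
    have h2 := dvd_add h1 ih
    simpa using h2

/-- Auxiliary key identity:  `a·X·(1 + b·X·w)⁻¹ = a·X − ab·X²·(w·(1 + b·X·w)⁻¹)`. -/
lemma key (a b : K) (w : PowerSeries K) (hw : constantCoeff w = 1) :
    C a * X * (1 + C b * X * w)⁻¹
      = C a * X - C (a * b) * X ^ 2 * (w * (1 + C b * X * w)⁻¹) := by
  have hA : (1 + C b * X * w) * (1 + C b * X * w)⁻¹ = 1 :=
    PowerSeries.mul_inv_cancel _ (by simp [hw])
  have hab : C (a * b) = C a * C b := map_mul _ _ _
  rw [hab]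
  linear_combination (C a * X) * hA

/-- `U c m d` is the "tail" object: `w/(1 + c_{2m} x w)` where `w = Sconv c (2m+1) (2d)`. -/
def U (m d : ℕ) : PowerSeries K :=
  Sconv c (2 * m + 1) (2 * d) *
    (1 + C (c (2 * m)) * X * Sconv c (2 * m + 1) (2 * d))⁻¹

lemma constU (m d : ℕ) : constantCoeff (U c m d) = 1 := by
  rw [U, map_mul, PowerSeries.constantCoeff_inv]
  simp [constS]

/-- Two steps of the Stieltjes recursion. -/
lemma S_two_step (i d : ℕ) :
    Sconv c i (2 * d + 2)
      = (1 + C (c i) * X * (1 + C (c (i + 1)) * X * Sconv c (i + 2) (2 * d))⁻¹)⁻¹ := by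
  have h1 : Sconv c i (2 * d + 2) = (1 + C (c i) * X * Sconv c (i + 1) (2 * d + 1))⁻¹ := rfl
  have h2 : Sconv c (i + 1) (2 * d + 1)
      = (1 + C (c (i + 1)) * X * Sconv c (i + 2) (2 * d))⁻¹ := rfl
  rw [h1, h2]

/-- The exact contraction identity for the tails (`m ≥ 1` level). -/
lemma U_succ (m d : ℕ) :
    U c m (d + 1)
      = (1 + C (c (2 * m) + c (2 * m + 1)) * X
          - C (c (2 * m + 1) * c (2 * m + 2)) * X ^ 2 * U c (m + 1) d)⁻¹ := by
  have hSB : Sconv c (2 * m + 1) (2 * (d + 1))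
      = (1 + C (c (2 * m + 1)) * X
          * (1 + C (c (2 * m + 2)) * X * Sconv c (2 * m + 3) (2 * d))⁻¹)⁻¹ := by
    rw [show 2 * (d + 1) = 2 * d + 2 by ring, S_two_step,
      show 2 * m + 1 + 1 = 2 * m + 2 by ring, show 2 * m + 1 + 2 = 2 * m + 3 by ring]
  have hUm1 : U c (m + 1) d
      = Sconv c (2 * m + 3) (2 * d)
        * (1 + C (c (2 * m + 2)) * X * Sconv c (2 * m + 3) (2 * d))⁻¹ := by
    rw [U, show 2 * (m + 1) + 1 = 2 * m + 3 by ring, show 2 * (m + 1) = 2 * m + 2 by ring]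
  have hBB : (1 + C (c (2 * m + 1)) * X
        * (1 + C (c (2 * m + 2)) * X * Sconv c (2 * m + 3) (2 * d))⁻¹)
      * (1 + C (c (2 * m + 1)) * X
        * (1 + C (c (2 * m + 2)) * X * Sconv c (2 * m + 3) (2 * d))⁻¹)⁻¹ = 1 :=
    PowerSeries.mul_inv_cancel _
      (by simp [PowerSeries.constantCoeff_inv, constS])
  have hkey := key (K := K) (c (2 * m + 1)) (c (2 * m + 2))
    (Sconv c (2 * m + 3) (2 * d)) (constS c _ _)
  have hD : 1 + C (c (2 * m) + c (2 * m + 1)) * X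
      - C (c (2 * m + 1) * c (2 * m + 2)) * X ^ 2 * U c (m + 1) d
      = (1 + C (c (2 * m)) * X
          * (1 + C (c (2 * m + 1)) * X
              * (1 + C (c (2 * m + 2)) * X * Sconv c (2 * m + 3) (2 * d))⁻¹)⁻¹)
        * (1 + C (c (2 * m + 1)) * X
            * (1 + C (c (2 * m + 2)) * X * Sconv c (2 * m + 3) (2 * d))⁻¹) := by
    rw [hUm1, map_add]
    linear_combination - hkey - (C (c (2 * m)) * X) * hBB
  rw [U, hSB, hD, PowerSeries.mul_inv_rev]

/-- Lemma B: the tails agree with the Jacobi convergents modulo `X^(2d)`. -/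
lemma LB : ∀ d m, 1 ≤ m → X ^ (2 * d) ∣ U c m d - Jconv c m d := by
  intro d
  induction d with
  | zero => intro m _; simpa using one_dvd _
  | succ d ih =>
    intro m hm
    rw [U_succ]
    have hJ : Jconv c m (d + 1)
        = (1 + C (c (2 * m) + c (2 * m + 1)) * X
            - C (c (2 * m + 1) * c (2 * m + 2)) * X ^ 2 * Jconv c (m + 1) d)⁻¹ := by
      rw [show Jconv c m (d + 1)
          = (1 + PowerSeries.C (if m = 0 then c 1 else c (2 * m) + c (2 * m + 1)) * X
              - PowerSeries.C (c (2 * m + 1) * c (2 * m + 2)) * X ^ 2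
                * Jconv c (m + 1) d)⁻¹ from rfl,
        if_neg (by omega : ¬ m = 0)]
    rw [hJ]
    refine inv_sub_inv ?_ ?_ ?_
    · simp [constU]
    · simp [constJ]
    · obtain ⟨t, ht⟩ := ih (m + 1) (by omega)
      refine ⟨-(C (c (2 * m + 1) * c (2 * m + 2)) * t), ?_⟩
      linear_combination (-(C (c (2 * m + 1) * c (2 * m + 2)) * X ^ 2)) * ht

/-- Top-level contraction: `Sconv` at even depth agrees with `Jconv` modulo that depth. -/
lemma LTop (d : ℕ) :
    X ^ (2 * (d + 1)) ∣ Sconv c 1 (2 * (d + 1)) - Jconv c 0 (d + 1) := by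
  have hS : Sconv c 1 (2 * (d + 1))
      = (1 + C (c 1) * X * (1 + C (c 2) * X * Sconv c 3 (2 * d))⁻¹)⁻¹ := by
    rw [show 2 * (d + 1) = 2 * d + 2 by ring, S_two_step]
  have hUm1 : U c 1 d
      = Sconv c 3 (2 * d) * (1 + C (c 2) * X * Sconv c 3 (2 * d))⁻¹ := by
    rw [U]
  have hkey := key (K := K) (c 1) (c 2) (Sconv c 3 (2 * d)) (constS c _ _)
  have hJ : Jconv c 0 (d + 1)
      = (1 + C (c 1) * X - C (c 1 * c 2) * X ^ 2 * Jconv c 1 d)⁻¹ := by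
    rw [show Jconv c 0 (d + 1)
        = (1 + PowerSeries.C (if (0 : ℕ) = 0 then c 1 else c (2 * 0) + c (2 * 0 + 1)) * X
            - PowerSeries.C (c (2 * 0 + 1) * c (2 * 0 + 2)) * X ^ 2
              * Jconv c (0 + 1) d)⁻¹ from rfl]
    norm_num
  have hD : 1 + C (c 1) * X * (1 + C (c 2) * X * Sconv c 3 (2 * d))⁻¹
      = 1 + C (c 1) * X - C (c 1 * c 2) * X ^ 2 * U c 1 d := by
    rw [hUm1]
    linear_combination hkey
  rw [hS, hJ, hD]
  refine inv_sub_inv ?_ ?_ ?_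
  · simp [constU]
  · simp [constJ]
  · obtain ⟨t, ht⟩ := LB c d 1 le_rfl
    refine ⟨-(C (c 1 * c 2) * t), ?_⟩
    linear_combination (-(C (c 1 * c 2) * X ^ 2)) * ht

end RogersAux

/-- Rogers' contraction: the Stieltjes continued fraction
`1/(1 + c₁x/(1 + c₂x/(1 + c₃x/⋯)))` and the Jacobi continued fraction
`1/(1 + c₁x − c₁c₂x²/(1 + (c₂+c₃)x − c₃c₄x²/⋯))` define the same formal power
series: for each `n ≥ 1`, their depth-`n` convergents agree up to order `xⁿ`. -/
theorem rogers_contraction {K : Type*} [Field K] (c : ℕ → K) (n : ℕ) (hn : 1 ≤ n) :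
    ∀ m : ℕ, m ≤ n →
      PowerSeries.coeff m (Sconv c 1 n) = PowerSeries.coeff m (Jconv c 0 n) := by
  open PowerSeries RogersAux in
  intro m hm
  set e : ℕ := n / 2 with he
  have hle1 : n ≤ 2 * (e + 1) := by omega
  have hle2 : n + 1 ≤ 2 * (e + 1) := by omega
  have hle3 : e + 1 ≤ n := by omega
  have h1 : X ^ (n + 1) ∣ Sconv c 1 (2 * (e + 1)) - Sconv c 1 n :=
    S_trunc_le c 1 hle1
  have h2 : X ^ (n + 1) ∣ Sconv c 1 (2 * (e + 1)) - Jconv c 0 (e + 1) :=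
    dvd_trans (pow_dvd_pow X hle2) (LTop c e)
  have h3 : X ^ (n + 1) ∣ Jconv c 0 n - Jconv c 0 (e + 1) :=
    dvd_trans (pow_dvd_pow X (by omega)) (J_trunc_le c 0 hle3)
  have hmain : X ^ (n + 1) ∣ Sconv c 1 n - Jconv c 0 n := by
    have h4 := dvd_sub (dvd_sub h2 h1) h3
    simpa using h4
  have hz := (PowerSeries.X_pow_dvd_iff.mp hmain) m (by omega)
  rw [map_sub] at hz
  exact sub_eq_zero.mp hz
end
end
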